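/- For g = 6, with f = −48℘, (℘')² = 4℘³ − g₃, S(x,z) = z² − 880g₃ + 3520℘³, Q(x,z) = −16z℘, the second compatibility equation 8f²Q_x + 36zS_x + 9Q_xf_{xx} + 15f_xQ_{xx} + 2Qf_{xxx} + 2f(4Qf_x + 5Q_{xxx}) + 2Q_{xxxxx} = 0 holds identically. -/

import Mathlib

open Filter Topology

private lemma diffIter {p : ℂ → ℂ} (hp : ContDiff ℂ ⊤ p) (n : ℕ) :
    Differentiable ℂ (iteratedDeriv n p) :=
  hp.differentiable_iteratedDeriv n (by exact_mod_cast lt_top_iff_ne_top.2 (by simp))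

private lemma diffP' {p : ℂ → ℂ} (hp : ContDiff ℂ ⊤ p) : Differentiable ℂ (deriv p) := by
  have := diffIter hp 1
  rwa [iteratedDeriv_one] at this

private lemma iter_cmul {p : ℂ → ℂ} (hp : ContDiff ℂ ⊤ p) (c : ℂ) :
    ∀ n, iteratedDeriv n (fun x => c * p x) = fun x => c * iteratedDeriv n p x := by
  intro n
  induction n with
  | zero => simp
  | succ n ih =>
    funext x
    rw [iteratedDeriv_succ, ih, iteratedDeriv_succ]
    exact deriv_const_mul c ((diffIter hp n) x)

private lemma iter_zero : ∀ n, iteratedDeriv n (fun _ : ℂ => (0 : ℂ)) = fun _ => 0 := by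
  intro n
  induction n with
  | zero => simp
  | succ n ih => rw [iteratedDeriv_succ, ih]; funext x; simp

private lemma key2 {p : ℂ → ℂ} {g3 : ℂ} (hp : ContDiff ℂ ⊤ p)
    (hode : ∀ x, (deriv p x) ^ 2 = 4 * (p x) ^ 3 - g3)
    (hne : ∃ x₀, deriv p x₀ ≠ 0) :
    ∀ x, iteratedDeriv 2 p x = 6 * p x ^ 2 := by
  have hpd : Differentiable ℂ p := hp.differentiable (by simp)
  have hd1 : Differentiable ℂ (deriv p) := diffP' hp
  have h2d : iteratedDeriv 2 p = deriv (deriv p) := by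
    rw [iteratedDeriv_succ, iteratedDeriv_one]
  have hkey : ∀ x, deriv p x * (iteratedDeriv 2 p x - 6 * p x ^ 2) = 0 := by
    intro x
    have H1 : HasDerivAt (fun y => deriv p y ^ 2)
        (2 * deriv p x ^ 1 * iteratedDeriv 2 p x) x := by
      have := ((hd1 x).hasDerivAt).fun_pow 2
      simpa [h2d, Nat.cast_ofNat] using this
    have H2 : HasDerivAt (fun y => 4 * p y ^ 3 - g3)
        (4 * (3 * p x ^ 2 * deriv p x)) x := by
      have := (((hpd x).hasDerivAt).pow 3).const_mul 4
      simpa using this.sub_const g3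
    have hfe : (fun y => deriv p y ^ 2) = fun y => 4 * p y ^ 3 - g3 := funext hode
    rw [hfe] at H1
    have := H1.unique H2
    linear_combination this / 2
  have hpa : AnalyticOnNhd ℂ p Set.univ := hp.analyticOnNhd
  have hga : AnalyticOnNhd ℂ (fun x => iteratedDeriv 2 p x - 6 * p x ^ 2) Set.univ := by
    have h1 : AnalyticOnNhd ℂ (iteratedDeriv 2 p) Set.univ := by
      rw [h2d]; exact hpa.deriv.deriv
    exact h1.sub ((analyticOnNhd_const.mul (hpa.pow 2)))
  obtain ⟨x₀, hx₀⟩ := hne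
  have hev : ∀ᶠ y in 𝓝 x₀, deriv p y ≠ 0 :=
    (hd1 x₀).continuousAt.eventually_ne hx₀
  have hgz : (fun x => iteratedDeriv 2 p x - 6 * p x ^ 2) =ᶠ[𝓝 x₀] 0 :=
    hev.mono fun y hy => (mul_eq_zero.mp (hkey y)).resolve_left hy
  have := hga.eqOn_zero_of_preconnected_of_eventuallyEq_zero isPreconnected_univ
    (Set.mem_univ x₀) hgz
  intro x
  have hx := this (Set.mem_univ x)
  simpa [sub_eq_zero] using hx

private lemma key35 {p : ℂ → ℂ} (hp : ContDiff ℂ ⊤ p)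
    (h2 : ∀ x, iteratedDeriv 2 p x = 6 * p x ^ 2) :
    ∀ x, iteratedDeriv 3 p x = 12 * p x * deriv p x ∧
      iteratedDeriv 5 p x = 360 * p x ^ 2 * deriv p x := by
  have hpd : Differentiable ℂ p := hp.differentiable (by simp)
  have hd1 : Differentiable ℂ (deriv p) := diffP' hp
  have h2d : iteratedDeriv 2 p = deriv (deriv p) := by
    rw [iteratedDeriv_succ, iteratedDeriv_one]
  have hdd : ∀ x, HasDerivAt (deriv p) (6 * p x ^ 2) x := by
    intro x
    have := (hd1 x).hasDerivAt
    rwa [show deriv (deriv p) x = 6 * p x ^ 2 by rw [← h2d, h2 x]] at this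
  have h2f : iteratedDeriv 2 p = fun x => 6 * p x ^ 2 := funext h2
  have h3 : ∀ x, iteratedDeriv 3 p x = 12 * p x * deriv p x := by
    intro x
    rw [iteratedDeriv_succ, h2f]
    have : HasDerivAt (fun y => 6 * p y ^ 2) (6 * (2 * p x ^ 1 * deriv p x)) x :=
      (((hpd x).hasDerivAt).pow 2).const_mul 6
    rw [this.deriv]; ring
  have h3f : iteratedDeriv 3 p = fun x => 12 * p x * deriv p x := funext h3
  have h4 : ∀ x, iteratedDeriv 4 p x = 12 * (deriv p x) ^ 2 + 72 * p x ^ 3 := by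
    intro x
    rw [iteratedDeriv_succ, h3f]
    have : HasDerivAt (fun y => 12 * p y * deriv p y)
        (12 * deriv p x * deriv p x + (12 * p x) * (6 * p x ^ 2)) x := by
      have := (((hpd x).hasDerivAt).const_mul 12).fun_mul (hdd x)
      simpa [mul_comm, mul_assoc, mul_left_comm] using this
    rw [this.deriv]; ring
  have h4f : iteratedDeriv 4 p = fun x => 12 * (deriv p x) ^ 2 + 72 * p x ^ 3 := funext h4
  refine fun x => ⟨h3 x, ?_⟩
  rw [iteratedDeriv_succ, h4f]
  have : HasDerivAt (fun y => 12 * (deriv p y) ^ 2 + 72 * p y ^ 3)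
      (12 * (2 * deriv p x ^ 1 * (6 * p x ^ 2)) + 72 * (3 * p x ^ 2 * deriv p x)) x := by
    have hA := ((hdd x).fun_pow 2).const_mul 12
    have hB := (((hpd x).hasDerivAt).fun_pow 3).const_mul 72
    simpa using hA.fun_add hB
  rw [this.deriv]; ring

/-- For the Halphen operator with `g = 6`, `f = -48℘`,
`S = z² - 880g₃ + 3520℘³`, `Q = -16z℘` satisfy the second compatibility equation. -/
theorem stmt9 (p : ℂ → ℂ) (g3 z : ℂ) (hp : ContDiff ℂ ⊤ p)
    (hode : ∀ x, (deriv p x) ^ 2 = 4 * (p x) ^ 3 - g3) :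
    let f : ℂ → ℂ := fun x => -48 * p x
    let S : ℂ → ℂ := fun x => z ^ 2 - 880 * g3 + 3520 * (p x) ^ 3
    let Q : ℂ → ℂ := fun x => -16 * z * p x
    ∀ x, 8 * (f x) ^ 2 * deriv Q x + 36 * z * deriv S x
        + 9 * deriv Q x * iteratedDeriv 2 f x + 15 * deriv f x * iteratedDeriv 2 Q x
        + 2 * Q x * iteratedDeriv 3 f x
        + 2 * f x * (4 * Q x * deriv f x + 5 * iteratedDeriv 3 Q x)
        + 2 * iteratedDeriv 5 Q x = 0 := by
  intro f S Q x
  have hpd : Differentiable ℂ p := hp.differentiable (by simp)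
  have hQ : ∀ n, iteratedDeriv n Q x = -16 * z * iteratedDeriv n p x := by
    intro n; exact congrFun (iter_cmul hp (-16 * z) n) x
  have hf : ∀ n, iteratedDeriv n f x = -48 * iteratedDeriv n p x := by
    intro n; exact congrFun (iter_cmul hp (-48) n) x
  have hdQ : deriv Q x = -16 * z * deriv p x := by
    have := hQ 1; rwa [iteratedDeriv_one, iteratedDeriv_one] at this
  have hdf : deriv f x = -48 * deriv p x := by
    have := hf 1; rwa [iteratedDeriv_one, iteratedDeriv_one] at this
  have hdS : deriv S x = 3520 * (3 * p x ^ 2 * deriv p x) := by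
    have hS : HasDerivAt S (3520 * (3 * p x ^ 2 * deriv p x)) x := by
      have := (((hpd x).hasDerivAt).fun_pow 3).const_mul 3520
      simpa [S] using this.const_add (z ^ 2 - 880 * g3)
    exact hS.deriv
  have hfx : f x = -48 * p x := rfl
  have hQx : Q x = -16 * z * p x := rfl
  rw [hdQ, hdf, hdS, hQ 2, hQ 3, hQ 5, hf 2, hf 3, hfx, hQx]
  by_cases hz0 : ∀ y, deriv p y = 0
  · have hfz : deriv p = fun _ => (0 : ℂ) := funext hz0
    have hzer : ∀ n, iteratedDeriv (n + 1) p x = 0 := by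
      intro n; rw [iteratedDeriv_succ', hfz, iter_zero]
    rw [hzer 1, hzer 2, hzer 4, hz0 x]; ring
  · push_neg at hz0
    have h2 := key2 hp hode hz0
    obtain ⟨h3, h5⟩ := key35 hp h2 x
    rw [h2 x, h3, h5]; ring
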